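/- Tensoring preserves majorization on the appropriate factor: if p ⪯ p' are probability vectors of dimension d and q is any probability vector of dimension e, then p ⊗ q ⪯ p' ⊗ q. -/

import Mathlib

open Finset Kronecker ComplexOrder

/-- Non-increasing rearrangement of `p`. -/
noncomputable def sortDesc {n : ℕ} (p : Fin n → ℝ) : Fin n → ℝ :=
  fun i => p (Tuple.sort p i.rev)

/-- Sum of the `k` largest entries of `p`. -/
noncomputable def partialSum {n : ℕ} (p : Fin n → ℝ) (k : ℕ) : ℝ :=
  ∑ i ∈ Finset.univ.filter (fun i : Fin n => (i : ℕ) < k), sortDesc p i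

/-- `p ⪯ q`: `p` is majorized by `q`. -/
noncomputable def MajorizedBy {n : ℕ} (p q : Fin n → ℝ) : Prop :=
  (∀ k : ℕ, partialSum p k ≤ partialSum q k) ∧ (∑ i, p i = ∑ i, q i)

def IsProbVec {n : ℕ} (p : Fin n → ℝ) : Prop :=
  (∀ i, 0 ≤ p i) ∧ ∑ i, p i = 1

/-- Tensor (Kronecker) product of vectors. -/
def tensorVec {d e : ℕ} (p : Fin d → ℝ) (q : Fin e → ℝ) : Fin (d * e) → ℝ :=
  fun k => p (finProdFinEquiv.symm k).1 * q (finProdFinEquiv.symm k).2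

/-- Pad a vector with trailing zeros. -/
def padVec {d m : ℕ} (p : Fin d → ℝ) : Fin m → ℝ :=
  fun i => if h : (i : ℕ) < d then p ⟨i, h⟩ else 0

def DoublyStochastic {ι : Type*} [Fintype ι] (M : Matrix ι ι ℝ) : Prop :=
  (∀ i j, 0 ≤ M i j) ∧ (∀ i, ∑ j, M i j = 1) ∧ (∀ j, ∑ i, M i j = 1)

def IsDensityMatrix {ι : Type*} [Fintype ι] [DecidableEq ι] (ρ : Matrix ι ι ℂ) : Prop :=
  ρ.PosSemidef ∧ ρ.trace = 1

def IsPOVM {ι : Type*} [Fintype ι] [DecidableEq ι] {d : ℕ} (F : Fin d → Matrix ι ι ℂ) : Prop :=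
  (∀ a, (F a).PosSemidef) ∧ ∑ a, F a = 1

/-- Outcome distribution of POVM `F` on state `ρ`. -/
noncomputable def outDist {ι : Type*} [Fintype ι] [DecidableEq ι] {d : ℕ}
    (F : Fin d → Matrix ι ι ℂ) (ρ : Matrix ι ι ℂ) : Fin d → ℝ :=
  fun a => (Matrix.trace (F a * ρ)).re


lemma sortDesc_eq_comp {n : ℕ} (p : Fin n → ℝ) :
    ∃ σ : Equiv.Perm (Fin n), sortDesc p = p ∘ σ :=
  ⟨(Fin.revPerm).trans (Tuple.sort p), rfl⟩

lemma sortDesc_antitone {n : ℕ} (p : Fin n → ℝ) : Antitone (sortDesc p) := by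
  intro i j hij
  exact Tuple.monotone_sort p (Fin.rev_le_rev.mpr hij)

lemma card_filter_lt {n : ℕ} (k : ℕ) :
    (univ.filter fun i : Fin n => (i : ℕ) < k).card = min k n := by
  have : (univ.filter fun i : Fin n => (i : ℕ) < k) =
      (Finset.range (min k n)).attachFin
        (fun m hm => lt_of_lt_of_le (mem_range.mp hm) (min_le_right _ _)) := by
    ext i
    simp only [mem_filter, mem_univ, true_and, Finset.mem_attachFin, mem_range]
    omega
  rw [this, Finset.card_attachFin, Finset.card_range]

lemma sum_antitone_le {n : ℕ} (g : Fin n → ℝ) (hg : Antitone g) (T : Finset (Fin n)) :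
    ∑ i ∈ T, g i ≤ ∑ i ∈ univ.filter (fun i : Fin n => (i : ℕ) < T.card), g i := by
  set m := T.card with hm
  set I := univ.filter (fun i : Fin n => (i : ℕ) < m) with hI
  have hcardI : I.card = m := by
    rw [hI, card_filter_lt]
    exact min_eq_left (by simpa using Finset.card_le_univ T)
  have hcd : (T \ I).card = (I \ T).card :=
    Finset.card_sdiff_comm (by rw [hcardI])
  have key : ∑ i ∈ T \ I, g i ≤ ∑ i ∈ I \ T, g i := by
    have e := Finset.equivOfCardEq hcd
    calc ∑ i ∈ T \ I, g i = ∑ a : (T \ I : Finset (Fin n)), g a :=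
          (Finset.sum_coe_sort _ _).symm
      _ ≤ ∑ a : (T \ I : Finset (Fin n)), g (e a) := by
          apply Finset.sum_le_sum
          intro a _
          apply hg
          have ha : ¬ ((a : Fin n) : ℕ) < m := by
            have h2 := (Finset.mem_sdiff.mp a.2).2
            simp only [hI, Finset.mem_filter, Finset.mem_univ, true_and] at h2
            exact h2
          have hb : (((e a : Fin n)) : ℕ) < m := by
            have h2 := (Finset.mem_sdiff.mp (e a).2).1
            simp only [hI, Finset.mem_filter, Finset.mem_univ, true_and] at h2
            exact h2
          exact Fin.le_def.mpr (by omega)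
      _ = ∑ b : (I \ T : Finset (Fin n)), g b := Equiv.sum_comp e (fun b => g b)
      _ = ∑ i ∈ I \ T, g i := Finset.sum_coe_sort _ _
  calc ∑ i ∈ T, g i = ∑ i ∈ T ∩ I, g i + ∑ i ∈ T \ I, g i :=
        (Finset.sum_inter_add_sum_sdiff _ _ _).symm
    _ ≤ ∑ i ∈ T ∩ I, g i + ∑ i ∈ I \ T, g i := by linarith
    _ = ∑ i ∈ I ∩ T, g i + ∑ i ∈ I \ T, g i := by rw [Finset.inter_comm]
    _ = ∑ i ∈ I, g i := Finset.sum_inter_add_sum_sdiff _ _ _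

lemma sum_le_partialSum {n : ℕ} (p : Fin n → ℝ) (S : Finset (Fin n)) :
    ∑ i ∈ S, p i ≤ partialSum p S.card := by
  obtain ⟨σ, hσ⟩ := sortDesc_eq_comp p
  have h1 : ∑ i ∈ S, p i = ∑ i ∈ S.image σ.symm, sortDesc p i := by
    rw [Finset.sum_image (fun a _ b _ h => σ.symm.injective h)]
    simp [hσ]
  have h2 : (S.image σ.symm).card = S.card :=
    Finset.card_image_of_injective _ σ.symm.injective
  rw [h1, partialSum, ← h2]
  exact sum_antitone_le _ (sortDesc_antitone p) _

lemma exists_partialSum {n : ℕ} (p : Fin n → ℝ) (k : ℕ) :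
    ∃ S : Finset (Fin n), S.card = min k n ∧ ∑ i ∈ S, p i = partialSum p k := by
  obtain ⟨σ, hσ⟩ := sortDesc_eq_comp p
  refine ⟨(univ.filter fun i : Fin n => (i : ℕ) < k).image σ, ?_, ?_⟩
  · rw [Finset.card_image_of_injective _ σ.injective, card_filter_lt]
  · rw [Finset.sum_image (fun a _ b _ h => σ.injective h)]
    simp [partialSum, hσ]

lemma partialSum_mono {n : ℕ} {p : Fin n → ℝ} (hp : ∀ i, 0 ≤ p i) {k l : ℕ} (hkl : k ≤ l) :
    partialSum p k ≤ partialSum p l := by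
  obtain ⟨σ, hσ⟩ := sortDesc_eq_comp p
  apply Finset.sum_le_sum_of_subset_of_nonneg
  · intro i hi
    simp only [mem_filter, mem_univ, true_and] at hi ⊢
    omega
  · intro i _ _
    rw [hσ]
    exact hp _

lemma sum_tensorVec {d e : ℕ} (p : Fin d → ℝ) (q : Fin e → ℝ) :
    ∑ k, tensorVec p q k = (∑ i, p i) * (∑ j, q j) := by
  rw [← Equiv.sum_comp finProdFinEquiv (tensorVec p q), Finset.sum_mul_sum]
  rw [Fintype.sum_prod_type]
  simp [tensorVec]

lemma tensorVec_nonneg {d e : ℕ} {p : Fin d → ℝ} {q : Fin e → ℝ}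
    (hp : ∀ i, 0 ≤ p i) (hq : ∀ j, 0 ≤ q j) : ∀ k, 0 ≤ tensorVec p q k :=
  fun k => mul_nonneg (hp _) (hq _)


/-- tensoring with a fixed probability vector preserves majorization. -/
theorem tensor_preserves_majorization {d e : ℕ} (p p' : Fin d → ℝ) (q : Fin e → ℝ)
    (hp : IsProbVec p) (hp' : IsProbVec p') (hq : IsProbVec q)
    (h : MajorizedBy p p') :
    MajorizedBy (tensorVec p q) (tensorVec p' q) := by
  obtain ⟨hpnn, _⟩ := hp
  obtain ⟨hp'nn, _⟩ := hp'
  obtain ⟨hqnn, _⟩ := hq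
  obtain ⟨hmaj, hsum⟩ := h
  constructor
  · intro k
    obtain ⟨S, hScard, hSsum⟩ := exists_partialSum (tensorVec p q) k
    rw [← hSsum]
    set T : Finset (Fin d × Fin e) := S.map finProdFinEquiv.symm.toEmbedding with hT
    have hTcard : T.card = S.card := Finset.card_map _
    have hsumT : ∑ i ∈ S, tensorVec p q i = ∑ y ∈ T, p y.1 * q y.2 := by
      rw [hT, Finset.sum_map]
      simp [tensorVec]
    set A : Fin e → Finset (Fin d) :=
      fun j => (T.filter (fun y => y.2 = j)).image Prod.fst with hA
    have hAcard : ∀ j, (A j).card = (T.filter (fun y => y.2 = j)).card := by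
      intro j
      apply Finset.card_image_of_injOn
      intro x hx y hy hxy
      simp only [Finset.mem_coe, Finset.mem_filter] at hx hy
      exact Prod.ext hxy (hx.2.trans hy.2.symm)
    have hAsum : ∀ j, ∑ y ∈ T.filter (fun y => y.2 = j), p y.1 * q y.2
        = q j * ∑ i ∈ A j, p i := by
      intro j
      have : ∑ i ∈ A j, p i = ∑ y ∈ T.filter (fun y => y.2 = j), p y.1 := by
        rw [hA]
        apply Finset.sum_image
        intro x hx y hy hxy
        simp only [Finset.mem_coe, Finset.mem_filter] at hx hy
        exact Prod.ext hxy (hx.2.trans hy.2.symm)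
      rw [this, Finset.mul_sum]
      apply Finset.sum_congr rfl
      intro y hy
      have : y.2 = j := (Finset.mem_filter.mp hy).2
      rw [this, mul_comm]
    have hsplit : ∑ y ∈ T, p y.1 * q y.2 = ∑ j, q j * ∑ i ∈ A j, p i := by
      rw [← Finset.sum_fiberwise T (fun y => y.2) (fun y => p y.1 * q y.2)]
      exact Finset.sum_congr rfl fun j _ => hAsum j
    have hcards : ∑ j, (A j).card = S.card := by
      rw [← hTcard]
      simp_rw [hAcard]
      exact (Finset.card_eq_sum_card_fiberwise (fun y _ => Finset.mem_univ y.2)).symm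
    -- choose optimal sets for p'
    choose B hBcard hBsum using fun j => exists_partialSum p' ((A j).card)
    have hBcard' : ∀ j, (B j).card = (A j).card := by
      intro j
      rw [hBcard]
      exact min_eq_left (by simpa using Finset.card_le_univ (A j))
    set U : Finset (Fin (d * e)) :=
      Finset.univ.biUnion (fun j : Fin e => (B j).image (fun i => finProdFinEquiv (i, j)))
      with hU
    have hinj : ∀ j : Fin e, Function.Injective (fun i : Fin d => finProdFinEquiv (i, j)) := by
      intro j a b hab
      have := finProdFinEquiv.injective hab
      exact (Prod.ext_iff.mp this).1
    have hdisj : ∀ j1 ∈ (Finset.univ : Finset (Fin e)), ∀ j2 ∈ Finset.univ, j1 ≠ j2 →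
        Disjoint ((B j1).image fun i => finProdFinEquiv (i, j1))
          ((B j2).image fun i => finProdFinEquiv (i, j2)) := by
      intro j1 _ j2 _ hne
      rw [Finset.disjoint_left]
      intro a ha hb
      obtain ⟨x, _, hx⟩ := Finset.mem_image.mp ha
      obtain ⟨y, _, hy⟩ := Finset.mem_image.mp hb
      apply hne
      have := finProdFinEquiv.injective (hx.trans hy.symm)
      exact (Prod.ext_iff.mp this).2
    have hUcard : U.card = S.card := by
      rw [hU, Finset.card_biUnion hdisj]
      rw [← hcards]
      apply Finset.sum_congr rfl
      intro j _
      rw [Finset.card_image_of_injective _ (hinj j), hBcard']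
    have hUsum : ∑ i ∈ U, tensorVec p' q i = ∑ j, q j * partialSum p' ((A j).card) := by
      rw [hU, Finset.sum_biUnion (fun j1 h1 j2 h2 hne => hdisj j1 h1 j2 h2 hne)]
      apply Finset.sum_congr rfl
      intro j _
      rw [Finset.sum_image (fun a _ b _ hab => hinj j hab), ← hBsum j, Finset.mul_sum]
      apply Finset.sum_congr rfl
      intro i _
      simp [tensorVec, mul_comm]
    calc ∑ i ∈ S, tensorVec p q i = ∑ j, q j * ∑ i ∈ A j, p i := by rw [hsumT, hsplit]
      _ ≤ ∑ j, q j * partialSum p' ((A j).card) := by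
          apply Finset.sum_le_sum
          intro j _
          exact mul_le_mul_of_nonneg_left
            (le_trans (sum_le_partialSum p (A j)) (hmaj _)) (hqnn j)
      _ = ∑ i ∈ U, tensorVec p' q i := hUsum.symm
      _ ≤ partialSum (tensorVec p' q) U.card := sum_le_partialSum _ _
      _ ≤ partialSum (tensorVec p' q) k := by
          apply partialSum_mono (tensorVec_nonneg hp'nn hqnn)
          rw [hUcard, hScard]
          exact min_le_left _ _
  · rw [sum_tensorVec, sum_tensorVec, hsum]
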